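/- arXiv:1602.08177 — 6 statements merged into one kernel-verified Lean document; each statement's English description precedes it below -/
import Mathlib

section
/- Let A be a unital C*-algebra and τ : A → ℂ a faithful positive tracial continuous linear functional. For all positive elements σ, ρ ∈ A, one has τ(|σ^{1/2}ρ^{1/2}|) = τ(|ρ^{1/2}σ^{1/2}|). -/
open scoped ComplexOrder

/-- The absolute value `|x| = (star x * x)^{1/2}` of an element of a C*-algebra,
defined via the continuous functional calculus square root. -/
noncomputable def cstarAbs {A : Type*} [CStarAlgebra A] [PartialOrder A] [StarOrderedRing A]
    (x : A) : A :=
  CFC.sqrt (star x * x)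

/-- The τ-fidelity `F_τ(σ, ρ) = τ(|σ^{1/2} ρ^{1/2}|)`, as a real number. -/
noncomputable def fidelity {A : Type*} [CStarAlgebra A] [PartialOrder A] [StarOrderedRing A]
    (τ : A →L[ℂ] ℂ) (σ ρ : A) : ℝ :=
  (τ (cstarAbs (CFC.sqrt σ * CFC.sqrt ρ))).re

section Aux

variable {A : Type*} [CStarAlgebra A] [PartialOrder A] [StarOrderedRing A]

private lemma pow_aux (u : A) (n : ℕ) :
    (star u * u) ^ (n + 1) = star u * ((u * star u) ^ n * u) := by
  induction n with
  | zero => simp [mul_assoc]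
  | succ n ih =>
      rw [pow_succ, ih, pow_succ]
      simp only [mul_assoc]

private lemma trace_pow_aux (τ : A →L[ℂ] ℂ) (htr : ∀ x y : A, τ (x * y) = τ (y * x))
    (u : A) (n : ℕ) :
    τ ((star u * u) ^ (n + 1)) = τ ((u * star u) ^ (n + 1)) := by
  rw [pow_aux, htr, pow_succ, mul_assoc]

private lemma trace_aeval_aux (τ : A →L[ℂ] ℂ) (htr : ∀ x y : A, τ (x * y) = τ (y * x))
    (u : A) (Q : Polynomial ℝ) (hQ : Q.coeff 0 = 0) :
    τ (Polynomial.aeval (star u * u) Q) = τ (Polynomial.aeval (u * star u) Q) := by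
  rw [Polynomial.aeval_eq_sum_range, Polynomial.aeval_eq_sum_range, map_sum, map_sum]
  refine Finset.sum_congr rfl fun i _ => ?_
  rcases i with _ | n
  · simp [hQ]
  · rw [ContinuousLinearMap.map_smul_of_tower, ContinuousLinearMap.map_smul_of_tower,
      trace_pow_aux τ htr u n]

private lemma sqrt_eq_cfc_aux (c : A) (hc : 0 ≤ c) : CFC.sqrt c = cfc Real.sqrt c := by
  have hsc : IsSelfAdjoint c := .of_nonneg hc
  have hmul : cfc Real.sqrt c * cfc Real.sqrt c = c := by
    rw [← cfc_mul ..]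
    conv_rhs => rw [← cfc_id ℝ c]
    exact cfc_congr fun x hx => Real.mul_self_sqrt (spectrum_nonneg_of_nonneg hc hx)
  exact CFC.sqrt_unique hmul (cfc_nonneg fun x _ => Real.sqrt_nonneg x)

private lemma key_aux (τ : A →L[ℂ] ℂ) (htr : ∀ x y : A, τ (x * y) = τ (y * x)) (u : A) :
    τ (CFC.sqrt (star u * u)) = τ (CFC.sqrt (u * star u)) := by
  set c := star u * u with hc_def
  set d := u * star u with hd_def
  have hc : 0 ≤ c := star_mul_self_nonneg u
  have hd : 0 ≤ d := mul_star_self_nonneg u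
  have hsc : IsSelfAdjoint c := .of_nonneg hc
  have hsd : IsSelfAdjoint d := .of_nonneg hd
  rw [sqrt_eq_cfc_aux c hc, sqrt_eq_cfc_aux d hd]
  set R := max (‖c‖ * ‖(1:A)‖) (‖d‖ * ‖(1:A)‖) with hR_def
  have hR0 : (0 : ℝ) ≤ R :=
    le_max_of_le_left (mul_nonneg (norm_nonneg c) (norm_nonneg _))
  have hspec : ∀ a : A, 0 ≤ a → ‖a‖ * ‖(1:A)‖ ≤ R → spectrum ℝ a ⊆ Set.Icc 0 R := by
    intro a ha haR x hx
    have h0 : 0 ≤ x := spectrum_nonneg_of_nonneg ha hx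
    have := spectrum.norm_le_norm_mul_of_mem hx
    rw [Real.norm_of_nonneg h0] at this
    exact ⟨h0, this.trans haR⟩
  have hspecc : spectrum ℝ c ⊆ Set.Icc 0 R := hspec c hc (le_max_left _ _)
  have hspecd : spectrum ℝ d ⊆ Set.Icc 0 R := hspec d hd (le_max_right _ _)
  -- Weierstrass approximation of `Real.sqrt` on `[0, R]`
  set f : C(Set.Icc (0:ℝ) R, ℝ) :=
    ContinuousMap.restrict (Set.Icc (0:ℝ) R) ⟨Real.sqrt, Real.continuous_sqrt⟩ with hf_def
  have hmem : f ∈ (polynomialFunctions (Set.Icc (0:ℝ) R)).topologicalClosure := by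
    rw [polynomialFunctions_closure_eq_top]; trivial
  obtain ⟨g, hgmem, hgtends⟩ := mem_closure_iff_seq_limit.mp hmem
  have hP : ∀ n, ∃ P : Polynomial ℝ,
      Polynomial.toContinuousMapOnAlgHom (Set.Icc (0:ℝ) R) P = g n := by
    intro n
    have h : g n ∈ polynomialFunctions (Set.Icc (0:ℝ) R) := hgmem n
    obtain ⟨P, -, hPn⟩ := Subalgebra.mem_map.mp h
    exact ⟨P, hPn⟩
  choose P hP using hP
  have hPapp : ∀ n (x : Set.Icc (0:ℝ) R), g n x = (P n).eval (x : ℝ) := by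
    intro n x
    rw [← hP n]
    rfl
  set Q : ℕ → Polynomial ℝ := fun n => P n - Polynomial.C ((P n).eval 0) with hQ_def
  have hQ0 : ∀ n, (Q n).coeff 0 = 0 := by
    intro n
    simp [hQ_def, Polynomial.coeff_sub, Polynomial.coeff_zero_eq_eval_zero]
  -- the constant terms tend to zero
  have h0mem : (0 : ℝ) ∈ Set.Icc (0:ℝ) R := ⟨le_refl _, hR0⟩
  have heval0 : Filter.Tendsto (fun n => (P n).eval 0) Filter.atTop (nhds 0) := by
    have h := ((continuous_eval_const (⟨0, h0mem⟩ : Set.Icc (0:ℝ) R)).tendsto f).comp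
      hgtends
    have hfx : f ⟨0, h0mem⟩ = 0 := by simp [hf_def]
    rw [hfx] at h
    exact h.congr fun n => hPapp n ⟨0, h0mem⟩
  -- the error bound
  set ε : ℕ → ℝ := fun n => dist (g n) f + |(P n).eval 0| with hε_def
  have hε0 : Filter.Tendsto ε Filter.atTop (nhds 0) := by
    have h1 : Filter.Tendsto (fun n => dist (g n) f) Filter.atTop (nhds 0) :=
      tendsto_iff_dist_tendsto_zero.mp hgtends
    have h2 : Filter.Tendsto (fun n => |(P n).eval 0|) Filter.atTop (nhds 0) := by
      simpa using heval0.abs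
    simpa using h1.add h2
  have hbound : ∀ (a : A), 0 ≤ a → IsSelfAdjoint a → spectrum ℝ a ⊆ Set.Icc 0 R →
      Filter.Tendsto (fun n => cfc (fun x => (Q n).eval x) a) Filter.atTop
        (nhds (cfc Real.sqrt a)) := by
    intro a ha hsa hsp
    rw [← tendsto_sub_nhds_zero_iff]
    refine squeeze_zero_norm (fun n => ?_) hε0
    have hcont : ContinuousOn (fun x => (Q n).eval x) (spectrum ℝ a) :=
      ((Q n).continuous_aeval).continuousOn
    have hsub : cfc (fun x => (Q n).eval x) a - cfc Real.sqrt a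
        = cfc (fun x => (Q n).eval x - Real.sqrt x) a := by
      rw [cfc_sub (fun x => (Q n).eval x) Real.sqrt a]
    rw [hsub]
    apply norm_cfc_le
    · positivity
    · intro x hx
      obtain ⟨hx0, hxR⟩ := hsp hx
      have hmemx : x ∈ Set.Icc (0:ℝ) R := ⟨hx0, hxR⟩
      have hgx : g n ⟨x, hmemx⟩ = (P n).eval x := hPapp n ⟨x, hmemx⟩
      have hfx : f ⟨x, hmemx⟩ = Real.sqrt x := rfl
      have hdist : |(P n).eval x - Real.sqrt x| ≤ dist (g n) f := by
        have := ContinuousMap.dist_apply_le_dist (f := g n) (g := f) ⟨x, hmemx⟩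
        rwa [hgx, hfx, Real.dist_eq] at this
      have : (Q n).eval x - Real.sqrt x
          = ((P n).eval x - Real.sqrt x) - (P n).eval 0 := by
        simp [hQ_def]; ring
      rw [Real.norm_eq_abs, this]
      calc |((P n).eval x - Real.sqrt x) - (P n).eval 0|
          ≤ |(P n).eval x - Real.sqrt x| + |(P n).eval 0| := abs_sub _ _
        _ ≤ ε n := add_le_add_left hdist _
  have htendc := (τ.continuous.tendsto _).comp (hbound c hc hsc hspecc)
  have htendd := (τ.continuous.tendsto _).comp (hbound d hd hsd hspecd)
  have heq : ∀ n, τ (cfc (fun x => (Q n).eval x) c) = τ (cfc (fun x => (Q n).eval x) d) := by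
    intro n
    rw [cfc_polynomial (Q n) c, cfc_polynomial (Q n) d]
    exact trace_aeval_aux τ htr u (Q n) (hQ0 n)
  have : Filter.Tendsto (fun n => τ (cfc (fun x => (Q n).eval x) c)) Filter.atTop
      (nhds (τ (cfc Real.sqrt d))) := by
    simpa only [Function.comp_def, heq] using htendd
  exact tendsto_nhds_unique htendc this

end Aux

/-- `τ(|σ^{1/2} ρ^{1/2}|) = τ(|ρ^{1/2} σ^{1/2}|)` for positive `σ, ρ`. -/
theorem trace_abs_sqrt_mul_sqrt_comm
    {A : Type*} [CStarAlgebra A] [PartialOrder A] [StarOrderedRing A]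
    (τ : A →L[ℂ] ℂ)
    (htr : ∀ x y : A, τ (x * y) = τ (y * x))
    (hpos : ∀ x : A, 0 ≤ τ (star x * x))
    (hfaith : ∀ x : A, τ (star x * x) = 0 → x = 0)
    (σ ρ : A) (hσ : 0 ≤ σ) (hρ : 0 ≤ ρ) :
    τ (cstarAbs (CFC.sqrt σ * CFC.sqrt ρ)) = τ (cstarAbs (CFC.sqrt ρ * CFC.sqrt σ)) := by
  have hsσ : IsSelfAdjoint (CFC.sqrt σ) := IsSelfAdjoint.of_nonneg (CFC.sqrt_nonneg _)
  have hsρ : IsSelfAdjoint (CFC.sqrt ρ) := IsSelfAdjoint.of_nonneg (CFC.sqrt_nonneg _)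
  have hstar : star (CFC.sqrt σ * CFC.sqrt ρ) = CFC.sqrt ρ * CFC.sqrt σ := by
    rw [star_mul, hsσ.star_eq, hsρ.star_eq]
  have h2 : cstarAbs (CFC.sqrt ρ * CFC.sqrt σ)
      = CFC.sqrt ((CFC.sqrt σ * CFC.sqrt ρ) * star (CFC.sqrt σ * CFC.sqrt ρ)) := by
    rw [cstarAbs, hstar]
    congr 1
    rw [star_mul, hsσ.star_eq, hsρ.star_eq]
  rw [cstarAbs, h2]
  exact key_aux τ htr (CFC.sqrt σ * CFC.sqrt ρ)
end

section
/- Let A be a unital C*-algebra and τ : A → ℂ a faithful positive tracial continuous linear functional. If σ and ρ are τ-states of A, then 0 ≤ F_τ(σ, ρ) ≤ 1, where F_τ(σ, ρ) = τ(|σ^{1/2}ρ^{1/2}|). -/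
open scoped ComplexOrder

section aux
variable {A : Type*} [CStarAlgebra A] [PartialOrder A] [StarOrderedRing A]
variable (τ : A →L[ℂ] ℂ)

lemma tau_nonneg (hpos : ∀ x : A, 0 ≤ τ (star x * x)) {a : A} (ha : 0 ≤ a) : 0 ≤ τ a := by
  have h := hpos (CFC.sqrt a)
  rwa [(IsSelfAdjoint.of_nonneg (CFC.sqrt_nonneg _)).star_eq,
    CFC.sqrt_mul_sqrt_self a ha] at h

lemma tau_mono (hpos : ∀ x : A, 0 ≤ τ (star x * x)) {p q : A} (hpq : p ≤ q) :
    (τ p).re ≤ (τ q).re := by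
  have h := tau_nonneg τ hpos (sub_nonneg.2 hpq)
  rw [Complex.nonneg_iff] at h
  have := h.1
  rw [map_sub] at this
  simpa [sub_nonneg] using this

lemma tau_herm (hpos : ∀ x : A, 0 ≤ τ (star x * x)) (z : A) :
    τ (star z) = starRingEnd ℂ (τ z) := by
  have him : ∀ x : A, 0 ≤ x → (τ x).im = 0 := by
    intro x hx
    exact ((Complex.nonneg_iff).1 (tau_nonneg τ hpos hx)).2.symm
  have h0 : (τ 1).im = 0 := him 1 (by simpa using star_mul_self_nonneg (1 : A))
  have hzz : (τ (star z * z)).im = 0 := him _ (star_mul_self_nonneg _)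
  have egen : ∀ w : A, star (1 + w) * (1 + w) = 1 + w + star w + star w * w := by
    intro w
    simp only [star_add, star_one, add_mul, mul_add, one_mul, mul_one]
    abel
  have h1 : (τ (1 + z + star z + star z * z)).im = 0 := by
    rw [← egen]; exact him _ (star_mul_self_nonneg _)
  have hsw : star (Complex.I • z) = -Complex.I • star z := by
    simp [star_smul, Complex.conj_I]
  have hww : star (Complex.I • z) * (Complex.I • z) = star z * z := by
    rw [hsw, smul_mul_assoc, mul_smul_comm, smul_smul]
    simp [Complex.I_mul_I]
  have h2 : (τ (1 + Complex.I • z + -Complex.I • star z + star z * z)).im = 0 := by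
    rw [show (1 : A) + Complex.I • z + -Complex.I • star z + star z * z
        = star (1 + Complex.I • z) * (1 + Complex.I • z) by rw [egen, hww, hsw]]
    exact him _ (star_mul_self_nonneg _)
  simp only [map_add, map_smul, map_one, Complex.add_im, Complex.smul_im, Complex.smul_re,
    Complex.neg_im, Complex.neg_re, smul_eq_mul, neg_mul, Complex.mul_im, Complex.mul_re,
    Complex.I_re, Complex.I_im, h0, hzz] at h1 h2
  apply Complex.ext
  · rw [Complex.conj_re]; nlinarith [h2]
  · rw [Complex.conj_im]; nlinarith [h1]

lemma tau_cs (hpos : ∀ x : A, 0 ≤ τ (star x * x)) (x y : A) :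
    (τ (star x * y)).re ≤
      Real.sqrt (τ (star x * x)).re * Real.sqrt (τ (star y * y)).re := by
  set A0 := (τ (star x * x)).re with hA0
  set C0 := (τ (star y * y)).re with hC0
  set B := (τ (star x * y)).re with hB
  have hA0n : 0 ≤ A0 := ((Complex.nonneg_iff).1 (hpos x)).1
  have hC0n : 0 ≤ C0 := ((Complex.nonneg_iff).1 (hpos y)).1
  have hBrev : (τ (star y * x)).re = B := by
    have : star y * x = star (star x * y) := by simp [star_mul]
    rw [this, tau_herm τ hpos, Complex.conj_re]
  have key : ∀ t : ℝ, 0 ≤ A0 - 2 * t * B + t ^ 2 * C0 := by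
    intro t
    have h := hpos (x - (t : ℂ) • y)
    have e : star (x - (t : ℂ) • y) * (x - (t : ℂ) • y)
        = star x * x - (t : ℂ) • (star x * y) - (t : ℂ) • (star y * x)
          + ((t : ℂ) * t) • (star y * y) := by
      simp only [star_sub, star_smul, Complex.star_def, Complex.conj_ofReal,
        sub_mul, mul_sub, smul_mul_assoc, mul_smul_comm, smul_smul]
      module
    rw [e] at h
    have := ((Complex.nonneg_iff).1 h).1
    simp only [map_add, map_sub, map_smul, Complex.add_re, Complex.sub_re, smul_eq_mul,
      Complex.re_ofReal_mul, ← Complex.ofReal_mul, ← hA0, ← hC0, ← hB, hBrev] at this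
    nlinarith [this]
  have hsq : B ^ 2 ≤ A0 * C0 := by
    rcases eq_or_lt_of_le hC0n with hC | hC
    · have hB0 : B = 0 := by
        by_contra hne
        have h2B : 2 * B ≠ 0 := by simpa using hne
        have ht : 2 * ((A0 + 1) / (2 * B)) * B = A0 + 1 := by field_simp
        have hk := key ((A0 + 1) / (2 * B))
        rw [← hC] at hk
        rw [ht] at hk
        nlinarith [hk]
      rw [hB0, ← hC]; nlinarith
    · have hC0ne : C0 ≠ 0 := ne_of_gt hC
      have ht1 : 2 * (B / C0) * B = 2 * (B ^ 2 / C0) := by field_simp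
      have ht2 : (B / C0) ^ 2 * C0 = B ^ 2 / C0 := by field_simp
      have hk := key (B / C0)
      rw [ht1, ht2] at hk
      have : B ^ 2 / C0 ≤ A0 := by linarith
      calc B ^ 2 = B ^ 2 / C0 * C0 := by field_simp
        _ ≤ A0 * C0 := by nlinarith
  calc B ≤ |B| := le_abs_self B
    _ = Real.sqrt (B ^ 2) := (Real.sqrt_sq_eq_abs B).symm
    _ ≤ Real.sqrt (A0 * C0) := Real.sqrt_le_sqrt hsq
    _ = Real.sqrt A0 * Real.sqrt C0 := Real.sqrt_mul hA0n C0

end aux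

lemma scalar_key {t ε : ℝ} (ht : 0 ≤ t) (hε : 0 < ε) :
    Real.sqrt t ≤ (Real.sqrt (t + ε))⁻¹ * t + Real.sqrt ε := by
  set s := Real.sqrt t with hs_def
  set e := Real.sqrt ε with he_def
  set D := Real.sqrt (t + ε) with hD_def
  have hD0 : 0 < D := Real.sqrt_pos.2 (by linarith)
  have hs : 0 ≤ s := Real.sqrt_nonneg _
  have he : 0 ≤ e := Real.sqrt_nonneg _
  have hsD : s ≤ D := Real.sqrt_le_sqrt (by linarith)
  have hs2 : s ^ 2 = t := Real.sq_sqrt ht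
  have he2 : e ^ 2 = ε := Real.sq_sqrt hε.le
  have hDle : D ≤ s + e := by
    have h1 : t + ε ≤ (s + e) ^ 2 := by nlinarith [mul_nonneg hs he]
    calc D ≤ Real.sqrt ((s + e) ^ 2) := Real.sqrt_le_sqrt h1
      _ = s + e := Real.sqrt_sq (by positivity)
  have hkey : (s - e) * D ≤ t := by
    nlinarith [mul_le_mul_of_nonneg_left hDle hs, mul_le_mul_of_nonneg_left hsD he]
  have h2 : s - e ≤ t / D := (le_div_iff₀ hD0).2 hkey
  rw [div_eq_mul_inv] at h2
  linarith

/-- for τ-states `σ, ρ`, the fidelity satisfies `0 ≤ F_τ(σ, ρ) ≤ 1`. -/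
theorem fidelity_nonneg_and_le_one
    {A : Type*} [CStarAlgebra A] [PartialOrder A] [StarOrderedRing A]
    (τ : A →L[ℂ] ℂ)
    (htr : ∀ x y : A, τ (x * y) = τ (y * x))
    (hpos : ∀ x : A, 0 ≤ τ (star x * x))
    (hfaith : ∀ x : A, τ (star x * x) = 0 → x = 0)
    (σ ρ : A) (hσ : 0 ≤ σ) (hσ1 : τ σ = 1) (hρ : 0 ≤ ρ) (hρ1 : τ ρ = 1) :
    0 ≤ fidelity τ σ ρ ∧ fidelity τ σ ρ ≤ 1 := by
  set a := CFC.sqrt σ with ha_def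
  set b := CFC.sqrt ρ with hb_def
  have ha0 : 0 ≤ a := CFC.sqrt_nonneg _
  have hb0 : 0 ≤ b := CFC.sqrt_nonneg _
  have hasa : IsSelfAdjoint a := .of_nonneg ha0
  have hbsa : IsSelfAdjoint b := .of_nonneg hb0
  have haa : a * a = σ := CFC.sqrt_mul_sqrt_self σ hσ
  have hbb : b * b = ρ := CFC.sqrt_mul_sqrt_self ρ hρ
  set x := a * b with hx_def
  set c := star x * x with hc_def
  have hc0 : 0 ≤ c := star_mul_self_nonneg x
  have hcsa : IsSelfAdjoint c := .of_nonneg hc0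
  have hF : fidelity τ σ ρ = (τ (CFC.sqrt c)).re := rfl
  have hnn : 0 ≤ fidelity τ σ ρ := by
    rw [hF]
    exact ((Complex.nonneg_iff).1 (tau_nonneg τ hpos (CFC.sqrt_nonneg _))).1
  refine ⟨hnn, ?_⟩
  have hτa : (τ (star a * a)).re = 1 := by rw [hasa.star_eq, haa, hσ1]; simp
  have hτρ : (τ ρ).re = 1 := by rw [hρ1]; simp
  have hT0 : 0 ≤ (τ 1).re := by
    have h1 : (0 : A) ≤ 1 := by simpa using star_mul_self_nonneg (1 : A)
    exact ((Complex.nonneg_iff).1 (tau_nonneg τ hpos h1)).1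
  set T := (τ 1).re with hT_def
  have hspec : ∀ t ∈ spectrum ℝ c, 0 ≤ t := fun t ht => spectrum_nonneg_of_nonneg hc0 ht
  have hsqrt_eq : CFC.sqrt c = cfc Real.sqrt c := by
    rw [CFC.sqrt_eq_cfc, cfc_nnreal_eq_real _ _ hc0]
    exact cfc_congr fun t ht => by
      simp [Real.coe_sqrt, Real.coe_toNNReal t (hspec t ht)]
  have main : ∀ ε : ℝ, 0 < ε → fidelity τ σ ρ ≤ 1 + Real.sqrt ε * T := by
    intro ε hε
    set f : ℝ → ℝ := fun t => (Real.sqrt (|t| + ε))⁻¹ with hf_def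
    have hf_cont : Continuous f := by
      apply Continuous.inv₀
      · exact Real.continuous_sqrt.comp (continuous_abs.add continuous_const)
      · intro t
        have : 0 < |t| + ε := by positivity
        positivity
    have hf_con : ContinuousOn f (spectrum ℝ c) := hf_cont.continuousOn
    have hg_con : ContinuousOn (fun t : ℝ => f t * t) (spectrum ℝ c) :=
      (hf_cont.mul continuous_id).continuousOn
    have hgf_con : ContinuousOn (fun t : ℝ => f t * t * f t) (spectrum ℝ c) :=
      ((hf_cont.mul continuous_id).mul hf_cont).continuousOn
    set m := cfc f c with hm_def
    have hm0 : 0 ≤ m := cfc_nonneg (fun t _ => by positivity)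
    have hmsa : IsSelfAdjoint m := .of_nonneg hm0
    -- Step 1 : |x| ≤ cfc (f·id) c + √ε
    have step1 : CFC.sqrt c ≤ cfc (fun t : ℝ => f t * t) c + algebraMap ℝ A (Real.sqrt ε) := by
      rw [hsqrt_eq, ← cfc_add_const (Real.sqrt ε) (fun t : ℝ => f t * t) c hg_con hcsa]
      apply cfc_mono ?_ Real.continuous_sqrt.continuousOn
        ((hf_cont.mul continuous_id).add continuous_const).continuousOn
      intro t ht
      have ht0 := hspec t ht
      have := scalar_key ht0 hε
      simpa [hf_def, abs_of_nonneg ht0, mul_comm] using this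
    -- Step 2 : apply τ and monotonicity
    have halg : (τ (algebraMap ℝ A (Real.sqrt ε))).re = Real.sqrt ε * T := by
      rw [IsScalarTower.algebraMap_apply ℝ ℂ A, Algebra.algebraMap_eq_smul_one, map_smul]
      simp [hT_def, Complex.re_ofReal_mul, Complex.coe_algebraMap]
    have step2 : fidelity τ σ ρ ≤ (τ (cfc (fun t : ℝ => f t * t) c)).re + Real.sqrt ε * T := by
      rw [hF]
      have h := tau_mono τ hpos step1
      rw [map_add, Complex.add_re, halg] at h
      exact h
    -- Step 3 : cfc (f·id) c = m * c
    have hgc : cfc (fun t : ℝ => f t * t) c = m * c := by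
      have h := cfc_mul f (fun s : ℝ => s) c hf_con continuous_id.continuousOn
      rw [cfc_id' ℝ c] at h
      exact h
    -- u and w
    set u := x * m with hu_def
    have hsu : star u = m * star x := by rw [hu_def, star_mul, hmsa.star_eq]
    set w := b * star u with hw_def
    -- Step 4 : m * c = star u * x
    have step4 : m * c = star u * x := by rw [hsu, hc_def, mul_assoc]
    -- Step 5 : τ (star u * x) = τ (star a * w)
    have step5 : τ (star u * x) = τ (star a * w) := by
      rw [hasa.star_eq, hw_def, hx_def, htr (star u) (a * b), mul_assoc]
    -- Step 6 : star u * u ≤ 1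
    have hmcm : star u * u = m * c * m := by
      rw [hsu, hu_def, hc_def, ← mul_assoc, mul_assoc m (star x) x]
    have hq1 : star u * u ≤ 1 := by
      rw [hmcm, ← hgc, hm_def, ← cfc_mul _ f c hg_con hf_con]
      apply cfc_le_one
      intro t ht
      have ht0 := hspec t ht
      have hv : (0 : ℝ) < |t| + ε := by positivity
      have hfv : f t * f t = (|t| + ε)⁻¹ := by
        rw [hf_def, ← mul_inv, Real.mul_self_sqrt hv.le]
      have htle : t ≤ |t| + ε := by rw [abs_of_nonneg ht0]; linarith
      calc f t * t * f t = t * (f t * f t) := by ring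
        _ = t / (|t| + ε) := by rw [hfv, div_eq_mul_inv]
        _ ≤ 1 := div_le_one_of_le₀ htle hv.le
    -- Step 7 : (τ (star w * w)).re ≤ 1
    have hsww : star w * w = u * (ρ * star u) := by
      rw [hw_def, star_mul, star_star, hbsa.star_eq, mul_assoc, ← mul_assoc b b (star u), hbb]
    have step7 : (τ (star w * w)).re ≤ 1 := by
      have h1 : τ (star w * w) = τ (b * (star u * u) * b) := by
        rw [hsww, htr u (ρ * star u), mul_assoc ρ (star u) u, ← hbb,
          mul_assoc b b (star u * u), htr b (b * (star u * u))]
      have h2 : b * (star u * u) * b ≤ ρ := by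
        have h3 := star_left_conjugate_le_conjugate hq1 b
        rwa [hbsa.star_eq, mul_one, hbb] at h3
      rw [h1]
      calc (τ (b * (star u * u) * b)).re ≤ (τ ρ).re := tau_mono τ hpos h2
        _ = 1 := hτρ
    -- Step 8 : Cauchy-Schwarz
    have step8 : (τ (star a * w)).re ≤ 1 := by
      have hcs := tau_cs τ hpos a w
      rw [hτa, Real.sqrt_one, one_mul] at hcs
      have hwle : Real.sqrt (τ (star w * w)).re ≤ 1 := Real.sqrt_le_one.2 step7
      linarith
    calc fidelity τ σ ρ ≤ (τ (cfc (fun t : ℝ => f t * t) c)).re + Real.sqrt ε * T := step2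
      _ = (τ (star a * w)).re + Real.sqrt ε * T := by rw [hgc, step4, step5]
      _ ≤ 1 + Real.sqrt ε * T := by linarith [step8]
  -- conclude by letting ε → 0
  by_contra hcon
  push_neg at hcon
  set δ := fidelity τ σ ρ - 1 with hδ_def
  have hδ0 : 0 < δ := by simp [hδ_def]; linarith
  have hε0 : 0 < (δ / (T + 1)) ^ 2 := by positivity
  have h1 := main ((δ / (T + 1)) ^ 2) hε0
  rw [Real.sqrt_sq (by positivity)] at h1
  have h2 : δ / (T + 1) * T < δ := by
    rw [div_mul_eq_mul_div, div_lt_iff₀ (by linarith)]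
    nlinarith
  simp [hδ_def] at h2 ⊢
  linarith
end

section
/- Let A be a unital C*-algebra and τ : A → ℂ a faithful positive tracial continuous linear functional. If σ and ρ are τ-states of A, then F_τ(σ, ρ) = 0 if and only if σ and ρ are orthogonal, i.e., σρ = ρσ = 0. -/
open scoped ComplexOrder

/-- for τ-states `σ, ρ`, `F_τ(σ, ρ) = 0` iff `σ` and `ρ` are orthogonal,
i.e. `σρ = ρσ = 0`. -/
theorem fidelity_eq_zero_iff_orthogonal
    {A : Type*} [CStarAlgebra A] [PartialOrder A] [StarOrderedRing A]
    (τ : A →L[ℂ] ℂ)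
    (htr : ∀ x y : A, τ (x * y) = τ (y * x))
    (hpos : ∀ x : A, 0 ≤ τ (star x * x))
    (hfaith : ∀ x : A, τ (star x * x) = 0 → x = 0)
    (σ ρ : A) (hσ : 0 ≤ σ) (hσ1 : τ σ = 1) (hρ : 0 ≤ ρ) (hρ1 : τ ρ = 1) :
    fidelity τ σ ρ = 0 ↔ (σ * ρ = 0 ∧ ρ * σ = 0) := by
  set s := CFC.sqrt σ with hs_def
  set r := CFC.sqrt ρ with hr_def
  have hs : (0 : A) ≤ s := CFC.sqrt_nonneg (a := σ)
  have hr : (0 : A) ≤ r := CFC.sqrt_nonneg (a := ρ)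
  have hss : s * s = σ := CFC.sqrt_mul_sqrt_self σ hσ
  have hrr : r * r = ρ := CFC.sqrt_mul_sqrt_self ρ hρ
  have hssa : star s = s := hs.isSelfAdjoint.star_eq
  have hrsa : star r = r := hr.isSelfAdjoint.star_eq
  have hσsa : star σ = σ := hσ.isSelfAdjoint.star_eq
  have hρsa : star ρ = ρ := hρ.isSelfAdjoint.star_eq
  constructor
  · intro hF
    -- The fidelity is the trace of a positive element; it vanishes iff s * r = 0.
    set x := s * r with hx_def
    set y := CFC.sqrt (star x * x) with hy_def
    have hy : (0 : A) ≤ y := CFC.sqrt_nonneg _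
    have hyy : y * y = star x * x := CFC.sqrt_mul_sqrt_self _ (star_mul_self_nonneg x)
    have hysa : star y = y := hy.isSelfAdjoint.star_eq
    -- τ y is nonneg with real part 0, hence 0
    set z := CFC.sqrt y with hz_def
    have hz : (0 : A) ≤ z := CFC.sqrt_nonneg _
    have hzz : z * z = y := CFC.sqrt_mul_sqrt_self y hy
    have hzsa : star z = z := hz.isSelfAdjoint.star_eq
    have hτy : (0 : ℂ) ≤ τ y := by
      have := hpos z
      rwa [hzsa, hzz] at this
    have hτy0 : τ y = 0 := by
      have hre : (τ y).re = 0 := hF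
      have him : (τ y).im = 0 := by
        rw [Complex.le_def] at hτy
        simpa using hτy.2.symm
      exact Complex.ext (by simpa using hre) (by simpa using him)
    have hz0 : z = 0 := by
      apply hfaith
      rw [hzsa, hzz]; exact hτy0
    have hy0 : y = 0 := by rw [← hzz, hz0, mul_zero]
    have hx0 : x = 0 := by
      rw [← CStarRing.star_mul_self_eq_zero_iff, ← hyy, hy0, mul_zero]
    constructor
    · calc σ * ρ = s * (s * r) * r := by rw [← hss, ← hrr]; simp only [mul_assoc]
        _ = 0 := by rw [← hx_def, hx0]; simp
    · calc ρ * σ = r * (star (s * r)) * s := by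
            rw [star_mul, hssa, hrsa, ← hss, ← hrr]; simp only [mul_assoc]
        _ = 0 := by rw [← hx_def, hx0]; simp
  · rintro ⟨h1, h2⟩
    -- first: r * σ = 0
    have hrσ : r * σ = 0 := by
      rw [← CStarRing.star_mul_self_eq_zero_iff]
      rw [star_mul, hrsa, hσsa]
      calc σ * r * (r * σ) = σ * (r * r) * σ := by simp only [mul_assoc]
        _ = σ * ρ * σ := by rw [hrr]
        _ = 0 := by rw [h1]; simp
    -- hence s * r = 0
    have hx0 : s * r = 0 := by
      rw [← CStarRing.star_mul_self_eq_zero_iff]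
      rw [star_mul, hssa, hrsa]
      calc r * s * (s * r) = r * (s * s) * r := by simp only [mul_assoc]
        _ = r * σ * r := by rw [hss]
        _ = 0 := by rw [hrσ]; simp
    unfold fidelity cstarAbs
    rw [← hs_def, ← hr_def, hx0, star_zero, zero_mul, CFC.sqrt_zero, map_zero,
      Complex.zero_re]
end

section
/- Let A be a unital C*-algebra and τ : A → ℂ a faithful positive tracial continuous linear functional. If a positive linear map E : A → A preserves τ-fidelity (that is, τ ∘ E = τ and F_τ(E(σ), E(ρ)) = F_τ(σ, ρ) for all τ-states σ, ρ), then E is injective. -/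
open scoped ComplexOrder

section Aux

variable {A : Type*} [CStarAlgebra A] [PartialOrder A] [StarOrderedRing A]

lemma cstarSqrt_smul (r : ℝ) (x : A) (hr : 0 ≤ r) (hx : 0 ≤ x) :
    CFC.sqrt (r • x) = Real.sqrt r • CFC.sqrt x := by
  refine CFC.sqrt_unique ?_ (smul_nonneg (Real.sqrt_nonneg r) (CFC.sqrt_nonneg x))
  rw [smul_mul_smul_comm, Real.mul_self_sqrt hr, CFC.sqrt_mul_sqrt_self x hx]

lemma sqrt_posPart_mul_sqrt_negPart (a : A) (ha : IsSelfAdjoint a) :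
    CFC.sqrt a⁺ * CFC.sqrt a⁻ = 0 := by
  set p := CFC.sqrt (a⁺) with hp
  set q := CFC.sqrt (a⁻) with hq
  have hpnn : (0:A) ≤ p := CFC.sqrt_nonneg _
  have hqnn : (0:A) ≤ q := CFC.sqrt_nonneg _
  have hps : star p = p := (IsSelfAdjoint.of_nonneg hpnn).star_eq
  have hqs : star q = q := (IsSelfAdjoint.of_nonneg hqnn).star_eq
  have h1 : a⁺ * q = 0 := by
    rw [← CStarRing.mul_star_self_eq_zero_iff, star_mul, hqs,
      (IsSelfAdjoint.of_nonneg (CFC.posPart_nonneg a)).star_eq]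
    calc a⁺ * q * (q * a⁺) = a⁺ * (q * q) * a⁺ := by noncomm_ring
      _ = a⁺ * a⁻ * a⁺ := by rw [CFC.sqrt_mul_sqrt_self (a⁻) (CFC.negPart_nonneg a)]
      _ = 0 := by rw [CFC.posPart_mul_negPart]; simp
  rw [← CStarRing.star_mul_self_eq_zero_iff, star_mul, hps, hqs]
  calc q * p * (p * q) = q * (p * p) * q := by noncomm_ring
    _ = q * a⁺ * q := by rw [CFC.sqrt_mul_sqrt_self (a⁺) (CFC.posPart_nonneg a)]
    _ = q * (a⁺ * q) := by noncomm_ring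
    _ = 0 := by rw [h1, mul_zero]

lemma cstarAbs_of_nonneg {x : A} (hx : 0 ≤ x) : cstarAbs x = x := by
  rw [cstarAbs, (IsSelfAdjoint.of_nonneg hx).star_eq, CFC.sqrt_mul_self x hx]

lemma fidelity_self (τ : A →L[ℂ] ℂ) {x : A} (hx : 0 ≤ x) :
    fidelity τ x x = (τ x).re := by
  rw [fidelity, CFC.sqrt_mul_sqrt_self x hx, cstarAbs_of_nonneg hx]

end Aux

/-- a positive linear map preserving τ-fidelity is injective. -/
theorem injective_of_preserves_fidelity
    {A : Type*} [CStarAlgebra A] [PartialOrder A] [StarOrderedRing A]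
    (τ : A →L[ℂ] ℂ)
    (htr : ∀ x y : A, τ (x * y) = τ (y * x))
    (hpos : ∀ x : A, 0 ≤ τ (star x * x))
    (hfaith : ∀ x : A, τ (star x * x) = 0 → x = 0)
    (E : A →ₗ[ℂ] A)
    (hE : ∀ x : A, 0 ≤ x → 0 ≤ E x)
    (hEτ : ∀ x : A, τ (E x) = τ x)
    (hEfid : ∀ σ ρ : A, 0 ≤ σ → τ σ = 1 → 0 ≤ ρ → τ ρ = 1 →
      fidelity τ (E σ) (E ρ) = fidelity τ σ ρ) :
    Function.Injective E := by
  -- τ is real and nonnegative on positive elements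
  have hτ_nonneg : ∀ x : A, 0 ≤ x → 0 ≤ τ x := by
    intro x hx
    have h := hpos (CFC.sqrt x)
    rwa [(IsSelfAdjoint.of_nonneg (CFC.sqrt_nonneg (a := x))).star_eq,
      CFC.sqrt_mul_sqrt_self x hx] at h
  have hτ_faith : ∀ x : A, 0 ≤ x → τ x = 0 → x = 0 := by
    intro x hx h0
    have h : τ (star (CFC.sqrt x) * CFC.sqrt x) = 0 := by
      rwa [(IsSelfAdjoint.of_nonneg (CFC.sqrt_nonneg (a := x))).star_eq,
        CFC.sqrt_mul_sqrt_self x hx]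
    have := hfaith _ h
    rw [← CFC.sqrt_mul_sqrt_self x hx, this, mul_zero]
  -- key step: selfadjoint kernel elements vanish
  have key : ∀ a : A, IsSelfAdjoint a → E a = 0 → a = 0 := by
    intro a ha hEa
    have hsub : a⁺ - a⁻ = a := CFC.posPart_sub_negPart a
    have hEeq : E (a⁺) = E (a⁻) := by
      have : E (a⁺) - E (a⁻) = 0 := by rw [← map_sub, hsub, hEa]
      linear_combination (norm := module) this
    have hτeq : τ (a⁺) = τ (a⁻) := by
      rw [← hEτ (a⁺), ← hEτ (a⁻), hEeq]
    have hτp := hτ_nonneg _ (CFC.posPart_nonneg a)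
    set r : ℝ := (τ (a⁺)).re with hr
    have hτp_re : τ (a⁺) = (r : ℂ) := by
      rw [Complex.nonneg_iff] at hτp
      exact Complex.ext (by simp [hr]) (by simpa using hτp.2.symm)
    have hr_nonneg : 0 ≤ r := by
      rw [Complex.nonneg_iff] at hτp; exact hτp.1
    rcases eq_or_lt_of_le hr_nonneg with hr0 | hrpos
    · -- τ a⁺ = 0 : both parts vanish
      have h1 : a⁺ = 0 := hτ_faith _ (CFC.posPart_nonneg a) (by rw [hτp_re, ← hr0]; simp)
      have h2 : a⁻ = 0 := hτ_faith _ (CFC.negPart_nonneg a)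
        (by rw [← hτeq, hτp_re, ← hr0]; simp)
      rw [← hsub, h1, h2, sub_zero]
    · -- τ a⁺ = r > 0 : derive a contradiction via fidelity
      exfalso
      set σ : A := (r⁻¹ : ℝ) • a⁺ with hσ
      set ρ : A := (r⁻¹ : ℝ) • a⁻ with hρdef
      have hrinv : (0:ℝ) ≤ r⁻¹ := inv_nonneg.mpr hr_nonneg
      have hσpos : 0 ≤ σ := smul_nonneg hrinv (CFC.posPart_nonneg a)
      have hρpos : 0 ≤ ρ := smul_nonneg hrinv (CFC.negPart_nonneg a)
      have hτrsmul : ∀ x : A, τ ((r⁻¹ : ℝ) • x) = (r⁻¹ : ℂ) * τ x := by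
        intro x
        rw [← Complex.coe_smul, map_smul, smul_eq_mul, Complex.ofReal_inv]
      have hσ1 : τ σ = 1 := by
        rw [hσ, hτrsmul, hτp_re, ← Complex.ofReal_inv, ← Complex.ofReal_mul,
          inv_mul_cancel₀ hrpos.ne']
        simp
      have hρ1 : τ ρ = 1 := by
        rw [hρdef, hτrsmul, ← hτeq, hτp_re, ← Complex.ofReal_inv, ← Complex.ofReal_mul,
          inv_mul_cancel₀ hrpos.ne']
        simp
      have hfid := hEfid σ ρ hσpos hσ1 hρpos hρ1
      -- RHS is 0
      have hRHS : fidelity τ σ ρ = 0 := by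
        rw [fidelity, hσ, hρdef,
          cstarSqrt_smul _ _ hrinv (CFC.posPart_nonneg a),
          cstarSqrt_smul _ _ hrinv (CFC.negPart_nonneg a),
          smul_mul_smul_comm, sqrt_posPart_mul_sqrt_negPart a ha, smul_zero,
          cstarAbs, star_zero, zero_mul, CFC.sqrt_zero, map_zero]
        simp
      -- LHS is 1
      have hEσρ : E σ = E ρ := by
        rw [hσ, hρdef, ← Complex.coe_smul, ← Complex.coe_smul, map_smul, map_smul, hEeq]
      have hLHS : fidelity τ (E σ) (E ρ) = 1 := by
        rw [← hEσρ, fidelity_self τ (hE σ hσpos), hEτ, hσ1]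
        simp
      rw [hfid, hRHS] at hLHS
      exact zero_ne_one hLHS
  -- E is star-preserving on selfadjoints, hence kernel is star-closed
  have hsa : ∀ a : A, IsSelfAdjoint a → IsSelfAdjoint (E a) := by
    intro a ha
    have : E a = E (a⁺) - E (a⁻) := by rw [← map_sub, CFC.posPart_sub_negPart a]
    rw [this]
    exact ((IsSelfAdjoint.of_nonneg (hE _ (CFC.posPart_nonneg a))).sub
      (IsSelfAdjoint.of_nonneg (hE _ (CFC.negPart_nonneg a))))
  rw [injective_iff_map_eq_zero]
  intro x hx
  open ComplexStarModule in
  have hxuv : (ℜ x : A) + Complex.I • (ℑ x : A) = x := realPart_add_I_smul_imaginaryPart x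
  have hus : IsSelfAdjoint ((ℜ x : A)) := (ℜ x).2
  have hvs : IsSelfAdjoint ((ℑ x : A)) := (ℑ x).2
  have h1 : E (ℜ x : A) + Complex.I • E (ℑ x : A) = 0 := by
    rw [← map_smul, ← map_add, hxuv, hx]
  have h2 : E (ℜ x : A) - Complex.I • E (ℑ x : A) = 0 := by
    have := congrArg star h1
    rwa [star_add, star_smul, (hsa _ hus).star_eq, (hsa _ hvs).star_eq, Complex.star_def,
      Complex.conj_I, neg_smul, ← sub_eq_add_neg, star_zero] at this
  have hEu : E (ℜ x : A) = 0 := by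
    have h3 : (2:ℂ) • E (ℜ x : A) = 0 := by
      rw [two_smul]
      linear_combination (norm := module) h1 + h2
    have := congrArg (fun y => (2:ℂ)⁻¹ • y) h3
    simpa [smul_smul] using this
  have hEv : E (ℑ x : A) = 0 := by
    have h4 : Complex.I • E (ℑ x : A) = 0 := by
      rw [← h1, hEu, zero_add]
    have := congrArg (fun y => (-Complex.I : ℂ) • y) h4
    simpa [smul_smul, Complex.I_mul_I] using this
  have hu0 : (ℜ x : A) = 0 := key _ hus hEu
  have hv0 : (ℑ x : A) = 0 := key _ hvs hEv
  rw [← hxuv, hu0, hv0, smul_zero, add_zero]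
end

section
/- Let A be a unital C*-algebra that is finite (xy = 1 implies yx = 1 for x, y ∈ A) and quasi-transitive (if x A y = {0} for some x, y ∈ A, then x = 0 or y = 0), and let τ : A → ℂ be a faithful positive tracial continuous linear functional. If E : A → A is a surjective Schwarz map that preserves τ-fidelity, then E is an automorphism of A: E is a bijective, unital, multiplicative, star-preserving linear map. -/
open scoped ComplexOrder

section Aux

open scoped NNReal

variable {A : Type*} [CStarAlgebra A] [PartialOrder A] [StarOrderedRing A]

private lemma csmul_nonneg' (r : ℝ) (hr : 0 ≤ r) {x : A} (hx : 0 ≤ x) : 0 ≤ (r : ℂ) • x := by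
  have h1 : x = star (CFC.sqrt x) * CFC.sqrt x := by
    rw [(IsSelfAdjoint.of_nonneg (CFC.sqrt_nonneg _)).star_eq, CFC.sqrt_mul_sqrt_self x hx]
  have hsr : star ((Real.sqrt r : ℂ)) = ((Real.sqrt r : ℝ) : ℂ) := by
    rw [Complex.star_def, Complex.conj_ofReal]
  have h2 : (r : ℂ) • x
      = star ((Real.sqrt r : ℂ) • CFC.sqrt x) * ((Real.sqrt r : ℂ) • CFC.sqrt x) := by
    rw [star_smul, smul_mul_smul_comm, hsr, ← Complex.ofReal_mul,
      Real.mul_self_sqrt hr, ← h1]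
  rw [h2]
  exact star_mul_self_nonneg _

private lemma sqrt_csmul' (r : ℝ) (hr : 0 ≤ r) {x : A} (hx : 0 ≤ x) :
    CFC.sqrt (((r * r : ℝ) : ℂ) • x) = (r : ℂ) • CFC.sqrt x := by
  refine CFC.sqrt_unique ?_ (csmul_nonneg' r hr (CFC.sqrt_nonneg _))
  rw [smul_mul_smul_comm, ← Complex.ofReal_mul, CFC.sqrt_mul_sqrt_self x hx]

private lemma le_sqrt_core' [Nontrivial A] {c y : A} (hc : 0 ≤ c) (hy_nonneg : 0 ≤ y)
    (hcy : c * c ≤ y) (hy_unit : IsUnit y) :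
    c ≤ CFC.sqrt y := by
  set r : A := CFC.sqrt y with hr_def
  have hr_nonneg : 0 ≤ r := CFC.sqrt_nonneg _
  set p : A := CFC.sqrt r with hp_def
  have hp_nonneg : 0 ≤ p := CFC.sqrt_nonneg _
  have hp2 : p * p = r := CFC.sqrt_mul_sqrt_self r hr_nonneg
  have hr2 : r * r = y := CFC.sqrt_mul_sqrt_self y hy_nonneg
  have hyp : y = p * p * (p * p) := by rw [hp2, hr2]
  obtain ⟨u, hu⟩ := hy_unit
  set w : A := ↑u⁻¹ with hw_def
  have hyw : y * w = 1 := by rw [← hu, hw_def]; exact u.mul_inv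
  have hwy : w * y = 1 := by rw [← hu, hw_def]; exact u.inv_mul
  have hpy : p * y = y * p := by rw [hyp]; simp [mul_assoc]
  have hwp : w * p = p * w := by
    calc w * p = w * (p * (y * w)) := by rw [hyw, mul_one]
    _ = w * ((p * y) * w) := by rw [mul_assoc]
    _ = w * ((y * p) * w) := by rw [hpy]
    _ = (w * y) * (p * w) := by simp [mul_assoc]
    _ = p * w := by rw [hwy, one_mul]
  set q : A := p * p * p * w with hq_def
  have hpq : p * q = 1 := by
    have : p * q = y * w := by rw [hq_def, hyp]; simp [mul_assoc]
    rw [this, hyw]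
  have hqp : q * p = 1 := by
    have : q * p = y * w := by
      calc q * p = p * p * p * (w * p) := by rw [hq_def]; simp [mul_assoc]
      _ = p * p * p * (p * w) := by rw [hwp]
      _ = y * w := by rw [hyp]; simp [mul_assoc]
    rw [this, hyw]
  have hsy : star y = y := (IsSelfAdjoint.of_nonneg hy_nonneg).star_eq
  have hsp : star p = p := (IsSelfAdjoint.of_nonneg hp_nonneg).star_eq
  have hsc : star c = c := (IsSelfAdjoint.of_nonneg hc).star_eq
  have hsw : star w = w := by
    have h1 : star w * y = 1 := by rw [← hsy, ← star_mul, hyw, star_one]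
    calc star w = star w * (y * w) := by rw [hyw, mul_one]
    _ = (star w * y) * w := by rw [mul_assoc]
    _ = w := by rw [h1, one_mul]
  have hsq : star q = q := by
    have h1 : star q = w * (p * (p * p)) := by
      rw [hq_def]; simp [star_mul, hsw, hsp, mul_assoc]
    have h2 : w * (p * (p * p)) = q := by
      calc w * (p * (p * p)) = (w * p) * (p * p) := by simp [mul_assoc]
      _ = (p * w) * (p * p) := by rw [hwp]
      _ = p * ((w * p) * p) := by simp [mul_assoc]
      _ = p * ((p * w) * p) := by rw [hwp]
      _ = p * (p * (w * p)) := by simp [mul_assoc]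
      _ = p * (p * (p * w)) := by rw [hwp]
      _ = q := by rw [hq_def]; simp [mul_assoc]
    rw [h1, h2]
  have cqp : ∀ z : A, q * (p * z) = z := fun z => by rw [← mul_assoc, hqp, one_mul]
  have cpq : ∀ z : A, p * (q * z) = z := fun z => by rw [← mul_assoc, hpq, one_mul]
  set m : A := q * c * q with hm_def
  have hm0 : 0 ≤ m := by
    have h := star_left_conjugate_nonneg hc q
    rwa [hsq] at h
  set x : A := c * (q * q) with hx_def
  have hxx : star x * x = star (q * q) * (c * c) * (q * q) := by
    rw [hx_def, star_mul, star_mul, hsq, hsc]; simp [mul_assoc]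
  have hqyq : star (q * q) * y * (q * q) = 1 := by
    rw [star_mul, hsq, hyp]
    simp [mul_assoc, cqp, cpq, hqp, hpq]
  have hxx_le : star x * x ≤ 1 := by
    rw [hxx, ← hqyq]
    exact star_left_conjugate_le_conjugate hcy (q * q)
  have hx_norm : ‖x‖ ≤ 1 := by
    have h0 : 0 ≤ star x * x := star_mul_self_nonneg x
    have h1 : ‖star x * x‖ ≤ 1 := (CStarAlgebra.norm_le_one_iff_of_nonneg _ h0).mpr hxx_le
    rw [CStarRing.norm_star_mul_self] at h1
    nlinarith [norm_nonneg x]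
  have hms : ∀ z ∈ spectrum ℂ m, ‖z‖ ≤ 1 := by
    intro z hz
    by_cases hz0 : z = 0
    · simp [hz0]
    · have hm' : m = q * (c * q) := by rw [hm_def, mul_assoc]
      have hzm : z ∈ spectrum ℂ (q * (c * q)) \ {0} := ⟨hm' ▸ hz, by simp [hz0]⟩
      rw [spectrum.nonzero_mul_comm] at hzm
      have hxz : z ∈ spectrum ℂ x := by
        have : c * q * q = x := by rw [hx_def, mul_assoc]
        exact this ▸ hzm.1
      exact (spectrum.norm_le_norm_of_mem hxz).trans hx_norm
  have hm_norm : ‖m‖ ≤ 1 := by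
    have h1 : ‖m‖ ∈ spectrum ℝ m := CStarAlgebra.norm_mem_spectrum_of_nonneg hm0
    have h2 : (algebraMap ℝ ℂ ‖m‖) ∈ spectrum ℂ m := spectrum.algebraMap_mem ℂ h1
    have h3 := hms _ h2
    rwa [Complex.coe_algebraMap, Complex.norm_real, Real.norm_eq_abs,
      abs_of_nonneg (norm_nonneg m)] at h3
  have hm1 : m ≤ 1 := (CStarAlgebra.norm_le_one_iff_of_nonneg m hm0).mp hm_norm
  have hkey : c = star p * m * p := by
    rw [hsp, hm_def]
    calc c = (p * q) * c * (q * p) := by rw [hpq, hqp, one_mul, mul_one]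
    _ = p * (q * c * q) * p := by simp [mul_assoc]
  calc c = star p * m * p := hkey
  _ ≤ star p * 1 * p := star_left_conjugate_le_conjugate hm1 p
  _ = r := by rw [mul_one, hsp, hp2]

private lemma le_sqrt_of_sq_le' [Nontrivial A] {c d : A} (hc : 0 ≤ c) (hd : 0 ≤ d)
    (hcd : c * c ≤ d) : c ≤ CFC.sqrt d := by
  have key : ∀ ε : ℝ≥0, 0 < ε → c ≤ CFC.sqrt d + algebraMap ℝ≥0 A ε := by
    intro ε hε
    have halg_nonneg : (0:A) ≤ algebraMap ℝ≥0 A (ε * ε) := by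
      rw [← cfc_const (ε * ε) d (by exact hd)]
      exact cfc_predicate _ d
    set y : A := d + algebraMap ℝ≥0 A (ε * ε) with hy_def
    have hy_nonneg : 0 ≤ y := add_nonneg hd halg_nonneg
    have hcy : c * c ≤ y := hcd.trans (le_add_of_nonneg_right halg_nonneg)
    have hy_unit : IsUnit y := by
      refine CStarAlgebra.isUnit_of_le (algebraMap ℝ≥0 A (ε * ε)) (le_add_of_nonneg_left hd) ⟨halg_nonneg, ?_⟩
      exact (isUnit_iff_ne_zero.mpr (by positivity)).map (algebraMap ℝ≥0 A)
    have h1 : c ≤ CFC.sqrt y := le_sqrt_core' hc hy_nonneg hcy hy_unit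
    have h2 : CFC.sqrt y ≤ CFC.sqrt d + algebraMap ℝ≥0 A ε := by
      have hS : CFC.sqrt y = cfc (fun s : ℝ≥0 => NNReal.sqrt (s + ε * ε)) d := by
        refine CFC.sqrt_unique ?_ (cfc_predicate _ d)
        rw [← cfc_mul _ _ d]
        have heq : (fun s : ℝ≥0 => NNReal.sqrt (s + ε * ε) * NNReal.sqrt (s + ε * ε))
            = fun s : ℝ≥0 => s + ε * ε := by
          ext s; rw [NNReal.mul_self_sqrt]
        rw [heq, cfc_add d (fun s : ℝ≥0 => s) (fun _ : ℝ≥0 => ε * ε)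
          continuous_id.continuousOn continuousOn_const,
          cfc_id' ℝ≥0 d, cfc_const _ d]
      rw [hS]
      have hmono : cfc (fun s : ℝ≥0 => NNReal.sqrt (s + ε * ε)) d
          ≤ cfc (fun s : ℝ≥0 => NNReal.sqrt s + ε) d := by
        refine cfc_mono fun s _ => ?_
        have h1' : s + ε * ε ≤ (NNReal.sqrt s + ε) * (NNReal.sqrt s + ε) := by
          have h2' : (NNReal.sqrt s + ε) * (NNReal.sqrt s + ε)
              = s + (NNReal.sqrt s * ε + ε * NNReal.sqrt s) + ε * ε := by
            rw [add_mul, mul_add, mul_add, NNReal.mul_self_sqrt]; ring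
          rw [h2']
          exact add_le_add_left (le_add_of_nonneg_right (zero_le : (0:ℝ≥0) ≤ _)) _
        calc NNReal.sqrt (s + ε * ε)
            ≤ NNReal.sqrt ((NNReal.sqrt s + ε) * (NNReal.sqrt s + ε)) :=
              NNReal.sqrt_le_sqrt.mpr h1'
        _ = NNReal.sqrt s + ε := NNReal.sqrt_mul_self _
      refine hmono.trans (le_of_eq ?_)
      rw [cfc_add d (fun s : ℝ≥0 => NNReal.sqrt s) (fun _ : ℝ≥0 => ε)
        NNReal.continuous_sqrt.continuousOn continuousOn_const,
        cfc_const _ d, ← CFC.sqrt_eq_cfc]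
    exact h1.trans h2
  rw [← sub_nonneg]
  have htends : Filter.Tendsto (fun t : ℝ => CFC.sqrt d - c + t • (1 : A))
      (nhdsWithin 0 (Set.Ioi 0)) (nhds (CFC.sqrt d - c)) := by
    have hcont : Continuous (fun t : ℝ => CFC.sqrt d - c + t • (1 : A)) :=
      continuous_const.add (continuous_id.smul continuous_const)
    have := (hcont.tendsto 0).mono_left (nhdsWithin_le_nhds (s := Set.Ioi 0))
    simpa using this
  refine CStarAlgebra.isClosed_nonneg.mem_of_tendsto htends ?_
  refine Filter.eventually_of_mem self_mem_nhdsWithin fun t (ht : t ∈ Set.Ioi 0) => ?_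
  have ht0 : (0:ℝ) < t := ht
  have h1 := key t.toNNReal (by simpa using ht0)
  have h2 : algebraMap ℝ≥0 A t.toNNReal = t • (1 : A) := by
    rw [Algebra.algebraMap_eq_smul_one, NNReal.smul_def, Real.coe_toNNReal _ ht0.le]
  rw [h2] at h1
  have h3 : (0:A) ≤ CFC.sqrt d + t • (1:A) - c := sub_nonneg.mpr h1
  have heq : CFC.sqrt d + t • (1:A) - c = CFC.sqrt d - c + t • (1:A) := by abel
  rw [heq] at h3
  exact h3

/-- fidelity against a positive scalar multiple of the identity -/
private lemma fid_smul_one' (τ : A →L[ℂ] ℂ) (σ : A) (hσ : 0 ≤ σ) (r : ℝ) (hr : 0 ≤ r) :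
    fidelity τ σ (((r * r : ℝ) : ℂ) • 1) = r * (τ (CFC.sqrt σ)).re := by
  have h1 : CFC.sqrt ((((r * r : ℝ)) : ℂ) • (1:A)) = (r : ℂ) • 1 := by
    have := sqrt_csmul' (A := A) r hr (x := 1) (by simpa using star_mul_self_nonneg (1:A))
    rwa [CFC.sqrt_one] at this
  have hg : 0 ≤ CFC.sqrt σ := CFC.sqrt_nonneg _
  have hgs : star (CFC.sqrt σ) = CFC.sqrt σ := (IsSelfAdjoint.of_nonneg hg).star_eq
  have h2 : CFC.sqrt σ * ((r : ℂ) • (1:A)) = (r : ℂ) • CFC.sqrt σ := by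
    rw [mul_smul_comm, mul_one]
  have h3 : cstarAbs ((r : ℂ) • CFC.sqrt σ) = (r : ℂ) • CFC.sqrt σ := by
    rw [cstarAbs, star_smul, smul_mul_smul_comm, Complex.star_def, Complex.conj_ofReal,
      ← Complex.ofReal_mul, hgs, CFC.sqrt_mul_sqrt_self σ hσ]
    exact sqrt_csmul' r hr hσ
  rw [fidelity, h1, h2, h3, map_smul, smul_eq_mul, Complex.re_ofReal_mul]

end Aux

section MainAux

variable {A : Type*} [CStarAlgebra A] [PartialOrder A] [StarOrderedRing A]

private lemma expand3' (c d e f : A) : (c - Complex.I • d) * (e + Complex.I • f)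
    = c * e + d * f + Complex.I • (c * f - d * e) := by
  rw [sub_mul, mul_add, mul_add, smul_mul_assoc, mul_smul_comm, smul_mul_smul_comm,
    Complex.I_mul_I, neg_one_smul, smul_sub]
  abel

private lemma sa_decomp' {h : A} (hh : IsSelfAdjoint h) :
    ∃ b c : A, 0 ≤ b ∧ 0 ≤ c ∧ h = b - c := by
  refine ⟨((2⁻¹ : ℝ) : ℂ) • (algebraMap ℝ A ‖h‖ + h),
    ((2⁻¹ : ℝ) : ℂ) • (algebraMap ℝ A ‖h‖ - h), ?_, ?_, ?_⟩
  · refine csmul_nonneg' _ (by norm_num) ?_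
    have h1 := hh.neg_algebraMap_norm_le_self
    rw [neg_le_iff_add_nonneg, add_comm] at h1
    exact h1
  · exact csmul_nonneg' _ (by norm_num) (sub_nonneg.mpr hh.le_algebraMap_norm_self)
  · have hz : ((2⁻¹ : ℝ) : ℂ) = (2⁻¹ : ℂ) := by push_cast; ring
    rw [hz]
    match_scalars <;> ring

end MainAux

/-- on a finite, quasi-transitive unital C*-algebra, every surjective Schwarz
map preserving τ-fidelity is an automorphism: bijective, unital, multiplicative and
star-preserving. -/
theorem automorphism_of_schwarz_preserves_fidelity
    {A : Type*} [CStarAlgebra A] [PartialOrder A] [StarOrderedRing A]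
    (hfin : ∀ x y : A, x * y = 1 → y * x = 1)
    (hqt : ∀ x y : A, (∀ a : A, x * a * y = 0) → x = 0 ∨ y = 0)
    (τ : A →L[ℂ] ℂ)
    (htr : ∀ x y : A, τ (x * y) = τ (y * x))
    (hpos : ∀ x : A, 0 ≤ τ (star x * x))
    (hfaith : ∀ x : A, τ (star x * x) = 0 → x = 0)
    (E : A →ₗ[ℂ] A)
    (hSchwarz : ∀ x : A, star (E x) * E x ≤ E (star x * x))
    (hEτ : ∀ x : A, τ (E x) = τ x)
    (hEfid : ∀ σ ρ : A, 0 ≤ σ → τ σ = 1 → 0 ≤ ρ → τ ρ = 1 →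
      fidelity τ (E σ) (E ρ) = fidelity τ σ ρ)
    (hsurj : Function.Surjective E) :
    Function.Bijective E ∧ E 1 = 1 ∧ (∀ x y : A, E (x * y) = E x * E y) ∧
      ∀ x : A, E (star x) = star (E x) := by
  obtain hA | hA := subsingleton_or_nontrivial A
  · exact ⟨⟨fun a b _ => Subsingleton.elim a b, hsurj⟩, Subsingleton.elim _ _,
      fun x y => Subsingleton.elim _ _, fun x => Subsingleton.elim _ _⟩
  -- basic facts
  have hone : (0:A) ≤ 1 := by simpa using star_mul_self_nonneg (1:A)
  have hsd : ∀ {a : A}, 0 ≤ a → a = star (CFC.sqrt a) * CFC.sqrt a := by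
    intro a ha
    rw [(IsSelfAdjoint.of_nonneg (CFC.sqrt_nonneg (a := a))).star_eq,
      CFC.sqrt_mul_sqrt_self a ha]
  have τnonneg : ∀ {a : A}, 0 ≤ a → 0 ≤ τ a := by
    intro a ha; rw [hsd ha]; exact hpos _
  have τreal : ∀ {a : A}, 0 ≤ a → τ a = ((τ a).re : ℂ) := by
    intro a ha
    have h := Complex.le_def.mp (τnonneg ha)
    exact Complex.ext rfl (by simpa using h.2.symm)
  have τfaith : ∀ {a : A}, 0 ≤ a → τ a = 0 → a = 0 := by
    intro a ha h0
    have h1 := hsd ha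
    have h2 : CFC.sqrt a = 0 := hfaith _ (by rw [← h1]; exact h0)
    rw [h1, h2]; simp
  have Epos : ∀ {a : A}, 0 ≤ a → 0 ≤ E a := by
    intro a ha
    calc (0:A) ≤ star (E (CFC.sqrt a)) * E (CFC.sqrt a) := star_mul_self_nonneg _
    _ ≤ E (star (CFC.sqrt a) * CFC.sqrt a) := hSchwarz _
    _ = E a := by rw [← hsd ha]
  -- unitality
  have hE1 : E 1 = 1 := by
    have hp0 : 0 ≤ E 1 := Epos hone
    have hps : star (E 1) = E 1 := (IsSelfAdjoint.of_nonneg hp0).star_eq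
    have hp2 : E 1 * E 1 ≤ E 1 := by
      have h := hSchwarz 1
      rwa [hps, star_one, one_mul] at h
    have hpp0 : 0 ≤ E 1 * E 1 := by
      have h := star_mul_self_nonneg (E 1); rwa [hps] at h
    have hpnorm : ‖E 1‖ ≤ 1 := by
      have h2 : ‖E 1 * E 1‖ ≤ ‖E 1‖ := CStarAlgebra.norm_le_norm_of_nonneg_of_le hpp0 hp2
      have h3 : ‖E 1 * E 1‖ = ‖E 1‖ * ‖E 1‖ := by
        calc ‖E 1 * E 1‖ = ‖star (E 1) * E 1‖ := by rw [hps]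
        _ = ‖E 1‖ * ‖E 1‖ := CStarRing.norm_star_mul_self
      nlinarith [norm_nonneg (E 1)]
    have hle : E 1 ≤ 1 := (CStarAlgebra.norm_le_one_iff_of_nonneg _ hp0).mp hpnorm
    have h1 : (0:A) ≤ 1 - E 1 := sub_nonneg.mpr hle
    have h2 : τ (1 - E 1) = 0 := by rw [map_sub, hEτ, sub_self]
    have h3 := τfaith h1 h2
    exact (sub_eq_zero.mp h3).symm
  -- E is selfadjoint on selfadjoints
  have Esa : ∀ {h : A}, IsSelfAdjoint h → IsSelfAdjoint (E h) := by
    intro h hh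
    obtain ⟨b, c, hb, hc, rfl⟩ := sa_decomp' hh
    rw [map_sub]
    exact (IsSelfAdjoint.of_nonneg (Epos hb)).sub (IsSelfAdjoint.of_nonneg (Epos hc))
  -- real/imaginary decomposition
  have hdecomp : ∀ x : A, ∃ h k : A, IsSelfAdjoint h ∧ IsSelfAdjoint k ∧
      x = h + Complex.I • k ∧ star x = h - Complex.I • k := by
    intro x
    refine ⟨((2⁻¹ : ℝ) : ℂ) • (x + star x), (Complex.I * ((2⁻¹ : ℝ) : ℂ)) • (star x - x),
      ?_, ?_, ?_, ?_⟩
    · rw [IsSelfAdjoint, star_smul, star_add, star_star, Complex.star_def,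
        Complex.conj_ofReal, add_comm]
    · rw [IsSelfAdjoint, star_smul, star_sub, star_star, star_mul', Complex.star_def,
        Complex.conj_ofReal, Complex.conj_I, neg_mul, neg_smul, ← smul_neg, neg_sub]
    · have hz : ((2⁻¹ : ℝ) : ℂ) = (2⁻¹ : ℂ) := by push_cast; ring
      rw [hz]
      match_scalars <;> simp only [← mul_assoc, Complex.I_mul_I] <;> norm_num
    · have hz : ((2⁻¹ : ℝ) : ℂ) = (2⁻¹ : ℂ) := by push_cast; ring
      rw [hz]
      match_scalars <;> simp only [← mul_assoc, Complex.I_mul_I] <;> norm_num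
  -- star preservation
  have hstar : ∀ x : A, E (star x) = star (E x) := by
    intro x
    obtain ⟨h, k, hh, hk, hx, hsx⟩ := hdecomp x
    rw [hsx, hx, map_sub, map_add, map_smul, star_add, star_smul,
      (Esa hh).star_eq, (Esa hk).star_eq, Complex.star_def, Complex.conj_I, neg_smul,
      ← sub_eq_add_neg]
  -- the tracial state
  have hu_ne : τ 1 ≠ 0 := fun h => one_ne_zero (τfaith hone h)
  have hur_pos : 0 < (τ 1).re := by
    rcases lt_or_eq_of_le (Complex.le_def.mp (τnonneg hone)).1 with h | h
    · simpa using h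
    · exfalso; exact hu_ne (by rw [τreal hone, ← h]; simp)
  set ur : ℝ := (τ 1).re with hur_def
  set sv : ℝ := Real.sqrt ur⁻¹ with hsv_def
  have hsv0 : 0 ≤ sv := Real.sqrt_nonneg _
  have hsv2 : sv * sv = ur⁻¹ := Real.mul_self_sqrt (inv_nonneg.mpr hur_pos.le)
  set ρ0 : A := ((sv * sv : ℝ) : ℂ) • 1 with hρ0_def
  have hρ0_nonneg : 0 ≤ ρ0 := csmul_nonneg' _ (mul_self_nonneg sv) hone
  have hρ0_tr : τ ρ0 = 1 := by
    rw [hρ0_def, map_smul, smul_eq_mul, τreal hone, hsv2, ← hur_def, ← Complex.ofReal_mul,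
      inv_mul_cancel₀ hur_pos.ne']
    simp
  have hEρ0 : E ρ0 = ρ0 := by rw [hρ0_def, map_smul, hE1]
  -- the fidelity-derived identity
  have hD : ∀ b : A, 0 ≤ b → (τ (CFC.sqrt (E b))).re = (τ (CFC.sqrt b)).re := by
    intro b hb
    by_cases hb0 : b = 0
    · rw [hb0, map_zero]
    · have htb : τ b = (((τ b).re : ℝ) : ℂ) := τreal hb
      have ht_pos : 0 < (τ b).re := by
        rcases lt_or_eq_of_le (Complex.le_def.mp (τnonneg hb)).1 with h | h
        · simpa using h
        · exact absurd (τfaith hb (by rw [htb, ← h]; simp)) hb0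
      set t : ℝ := (τ b).re with ht_def
      set wt : ℝ := Real.sqrt t⁻¹ with hwt_def
      have hwt0 : 0 ≤ wt := Real.sqrt_nonneg _
      have hwt_pos : 0 < wt := Real.sqrt_pos.mpr (inv_pos.mpr ht_pos)
      have hwt2 : wt * wt = t⁻¹ := Real.mul_self_sqrt (inv_nonneg.mpr ht_pos.le)
      set σ : A := ((wt * wt : ℝ) : ℂ) • b with hσ_def
      have hσ0 : 0 ≤ σ := csmul_nonneg' _ (mul_self_nonneg wt) hb
      have hστ : τ σ = 1 := by
        rw [hσ_def, map_smul, smul_eq_mul, htb, hwt2, ← Complex.ofReal_mul,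
          inv_mul_cancel₀ ht_pos.ne']
        simp
      have hEσ : E σ = ((wt * wt : ℝ) : ℂ) • E b := by rw [hσ_def, map_smul]
      have hEσ0 : 0 ≤ E σ := Epos hσ0
      have hfidσ := hEfid σ ρ0 hσ0 hστ hρ0_nonneg hρ0_tr
      rw [hEρ0, hρ0_def, fid_smul_one' τ (E σ) hEσ0 sv hsv0,
        fid_smul_one' τ σ hσ0 sv hsv0] at hfidσ
      have hsv_pos : 0 < sv := Real.sqrt_pos.mpr (inv_pos.mpr hur_pos)
      have h5 : (τ (CFC.sqrt (E σ))).re = (τ (CFC.sqrt σ)).re :=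
        mul_left_cancel₀ hsv_pos.ne' hfidσ
      have h6 : CFC.sqrt σ = (wt : ℂ) • CFC.sqrt b := by
        rw [hσ_def]; exact sqrt_csmul' wt hwt0 hb
      have h7 : CFC.sqrt (E σ) = (wt : ℂ) • CFC.sqrt (E b) := by
        rw [hEσ]; exact sqrt_csmul' wt hwt0 (Epos hb)
      rw [h6, h7, map_smul, map_smul, smul_eq_mul, smul_eq_mul, Complex.re_ofReal_mul,
        Complex.re_ofReal_mul] at h5
      exact mul_left_cancel₀ hwt_pos.ne' h5
  -- squares of positives
  have hsq_pos : ∀ b : A, 0 ≤ b → E (b * b) = E b * E b := by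
    intro b hb
    have hEb : 0 ≤ E b := Epos hb
    have hbb : (0:A) ≤ b * b := by
      have h := star_mul_self_nonneg b
      rwa [(IsSelfAdjoint.of_nonneg hb).star_eq] at h
    have hcd : E b * E b ≤ E (b * b) := by
      have h := hSchwarz b
      rwa [(IsSelfAdjoint.of_nonneg hEb).star_eq, (IsSelfAdjoint.of_nonneg hb).star_eq] at h
    have hEbb : 0 ≤ E (b * b) := Epos hbb
    have hle : E b ≤ CFC.sqrt (E (b * b)) := le_sqrt_of_sq_le' hEb hEbb hcd
    have hg0 : 0 ≤ CFC.sqrt (E (b * b)) - E b := sub_nonneg.mpr hle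
    have hgτ : τ (CFC.sqrt (E (b * b)) - E b) = 0 := by
      have h1 : (τ (CFC.sqrt (E (b * b)))).re = (τ b).re := by
        rw [hD (b * b) hbb, CFC.sqrt_mul_self b hb]
      rw [map_sub, hEτ, τreal (CFC.sqrt_nonneg (a := E (b*b))), τreal hb, h1, sub_self]
    have h2 := τfaith hg0 hgτ
    have hsq : CFC.sqrt (E (b * b)) = E b := by rwa [sub_eq_zero] at h2
    calc E (b * b) = CFC.sqrt (E (b * b)) * CFC.sqrt (E (b * b)) :=
          (CFC.sqrt_mul_sqrt_self _ hEbb).symm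
    _ = E b * E b := by rw [hsq]
  -- Jordan identity on positives
  have hjordan : ∀ b c : A, 0 ≤ b → 0 ≤ c →
      E (b * c + c * b) = E b * E c + E c * E b := by
    intro b c hb hc
    have h1 := hsq_pos (b + c) (add_nonneg hb hc)
    have h2 : (b + c) * (b + c) = b * b + (b * c + c * b) + c * c := by noncomm_ring
    rw [h2, map_add, map_add, hsq_pos b hb, hsq_pos c hc, map_add] at h1
    have h3 : (E (b + c)) * (E (b + c))
        = E b * E b + (E b * E c + E c * E b) + E c * E c := by
      rw [map_add]; noncomm_ring
    rw [h3] at h1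
    rw [map_add]
    exact add_left_cancel (add_right_cancel h1)
  -- squares of selfadjoints
  have hsq_sa : ∀ h : A, IsSelfAdjoint h → E (h * h) = E h * E h := by
    intro h hh
    obtain ⟨b, c, hb, hc, rfl⟩ := sa_decomp' hh
    have h1 : (b - c) * (b - c) = b * b - (b * c + c * b) + c * c := by noncomm_ring
    rw [h1, map_add, map_sub, hsq_pos b hb, hsq_pos c hc, hjordan b c hb hc, map_sub]
    noncomm_ring
  -- τ-isometry
  have hiso : ∀ x : A, τ (star (E x) * E x) = τ (star x * x) := by
    intro x
    obtain ⟨h, k, hh, hk, hx, hsx⟩ := hdecomp x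
    have hEx : E x = E h + Complex.I • E k := by rw [hx, map_add, map_smul]
    have hEsx : star (E x) = E h - Complex.I • E k := by
      rw [← hstar x, hsx, map_sub, map_smul]
    have e1 : star x * x = h * h + k * k + Complex.I • (h * k - k * h) := by
      rw [hsx, hx]; exact expand3' h k h k
    have e2 : star (E x) * E x
        = E h * E h + E k * E k + Complex.I • (E h * E k - E k * E h) := by
      rw [hEsx, hEx]; exact expand3' (E h) (E k) (E h) (E k)
    rw [e1, e2]
    simp only [map_add, map_smul, map_sub]
    rw [htr h k, htr (E h) (E k), sub_self, sub_self, smul_zero, add_zero, add_zero, ← hsq_sa h hh, ← hsq_sa k hk, hEτ, hEτ]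
  -- multiplicativity, first for star x * x
  have hkey : ∀ x : A, E (star x * x) = star (E x) * E x := by
    intro x
    have h0 : 0 ≤ E (star x * x) - star (E x) * E x := sub_nonneg.mpr (hSchwarz x)
    have h1 : τ (E (star x * x) - star (E x) * E x) = 0 := by
      rw [map_sub, hEτ, hiso x, sub_self]
    exact sub_eq_zero.mp (τfaith h0 h1)
  -- polarization
  have hpolar : ∀ x y : A, E (star x * y) = star (E x) * E y := by
    intro x y
    have hxk := hkey x
    have hyk := hkey y
    have hsum : E (star x * y) + E (star y * x) = star (E x) * E y + star (E y) * E x := by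
      have hA := hkey (x + y)
      have eL : star (x + y) * (x + y)
          = star x * x + (star x * y + star y * x) + star y * y := by
        rw [star_add]; noncomm_ring
      have eR : star (E (x + y)) * E (x + y)
          = star (E x) * E x + (star (E x) * E y + star (E y) * E x)
            + star (E y) * E y := by
        rw [map_add, star_add]; noncomm_ring
      rw [eL, eR, map_add, map_add, hxk, hyk, map_add] at hA
      exact add_left_cancel (add_right_cancel hA)
    have hdiff : E (star x * y) - E (star y * x)
        = star (E x) * E y - star (E y) * E x := by
      have hB := hkey (x + Complex.I • y)
      have hsxy : star (x + Complex.I • y) = star x - Complex.I • star y := by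
        rw [star_add, star_smul, Complex.star_def, Complex.conj_I, neg_smul,
          ← sub_eq_add_neg]
      have eL : star (x + Complex.I • y) * (x + Complex.I • y)
          = star x * x + star y * y + Complex.I • (star x * y - star y * x) := by
        rw [hsxy]; exact expand3' (star x) (star y) x y
      have eR : star (E (x + Complex.I • y)) * E (x + Complex.I • y)
          = star (E x) * E x + star (E y) * E y
            + Complex.I • (star (E x) * E y - star (E y) * E x) := by
        have hExy : E (x + Complex.I • y) = E x + Complex.I • E y := by
          rw [map_add, map_smul]
        have hsExy : star (E (x + Complex.I • y)) = star (E x) - Complex.I • star (E y) := by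
          rw [hExy, star_add, star_smul, Complex.star_def, Complex.conj_I, neg_smul,
            ← sub_eq_add_neg]
        rw [hsExy, hExy]; exact expand3' (star (E x)) (star (E y)) (E x) (E y)
      rw [eL, eR, map_add, map_add, map_smul, hxk, hyk, map_sub] at hB
      exact smul_right_injective A Complex.I_ne_zero (add_left_cancel hB)
    -- combine
    have h2' : E (star x * y) + E (star x * y)
        = star (E x) * E y + star (E x) * E y := by
      have h3 := congrArg₂ (· + ·) hsum hdiff
      calc E (star x * y) + E (star x * y)
          = E (star x * y) + E (star y * x) + (E (star x * y) - E (star y * x)) := by abel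
      _ = star (E x) * E y + star (E y) * E x
          + (star (E x) * E y - star (E y) * E x) := h3
      _ = star (E x) * E y + star (E x) * E y := by abel
    have h2 : (2:ℂ) • E (star x * y) = (2:ℂ) • (star (E x) * E y) := by
      rw [two_smul, two_smul]; exact h2'
    exact smul_right_injective A two_ne_zero h2
  have hmul : ∀ x y : A, E (x * y) = E x * E y := by
    intro x y
    have h := hpolar (star x) y
    rwa [star_star, hstar x, star_star] at h
  have hinj : Function.Injective E := by
    intro a b hab
    have h1 : E (a - b) = 0 := by rw [map_sub, hab, sub_self]
    have h2 : τ (star (a - b) * (a - b)) = 0 := by rw [← hiso, h1]; simp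
    exact sub_eq_zero.mp (hfaith _ h2)
  exact ⟨⟨hinj, hsurj⟩, hE1, hmul, hstar⟩
end

section
/- Let d ∈ ℕ, d ≥ 1. For all positive semidefinite d×d complex matrices A and B, tr(|A^{1/2}B^{1/2}|) ≤ √(tr(A)·tr(B)). -/
open scoped ComplexOrder
open Matrix

open scoped Classical in
/-- The positive semidefinite square root of a positive semidefinite matrix
(junk value `0` if the matrix is not positive semidefinite). -/
noncomputable def matSqrt {d : ℕ} (M : Matrix (Fin d) (Fin d) ℂ) : Matrix (Fin d) (Fin d) ℂ :=
  if h : M.PosSemidef then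
    (h.1.eigenvectorUnitary : Matrix (Fin d) (Fin d) ℂ) *
      diagonal (fun i => ((Real.sqrt (h.1.eigenvalues i) : ℝ) : ℂ)) *
      (star h.1.eigenvectorUnitary : Matrix (Fin d) (Fin d) ℂ)
  else 0

/-- The absolute value `|X| = (Xᴴ X)^{1/2}` of a matrix. -/
noncomputable def matAbs {d : ℕ} (X : Matrix (Fin d) (Fin d) ℂ) : Matrix (Fin d) (Fin d) ℂ :=
  matSqrt (Xᴴ * X)

/-- The fidelity `F(σ, ρ) = tr |σ^{1/2} ρ^{1/2}|` of two matrices, as a real number. -/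
noncomputable def matFid {d : ℕ} (σ ρ : Matrix (Fin d) (Fin d) ℂ) : ℝ :=
  ((matAbs (matSqrt σ * matSqrt ρ)).trace).re

/-- The square root of a positive semidefinite matrix via its spectral decomposition. -/
noncomputable def Matrix.PosSemidef.sqrt {d : ℕ} {M : Matrix (Fin d) (Fin d) ℂ}
    (hM : M.PosSemidef) : Matrix (Fin d) (Fin d) ℂ :=
  (hM.1.eigenvectorUnitary : Matrix (Fin d) (Fin d) ℂ) *
    diagonal (fun i => ((Real.sqrt (hM.1.eigenvalues i) : ℝ) : ℂ)) *
    (star hM.1.eigenvectorUnitary : Matrix (Fin d) (Fin d) ℂ)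

lemma Matrix.PosSemidef.posSemidef_sqrt {d : ℕ} {M : Matrix (Fin d) (Fin d) ℂ}
    (hM : M.PosSemidef) : hM.sqrt.PosSemidef := by
  have hD : (diagonal (fun i => ((Real.sqrt (hM.1.eigenvalues i) : ℝ) : ℂ))).PosSemidef := by
    rw [Matrix.posSemidef_diagonal_iff]
    intro i
    exact Complex.zero_le_real.mpr (Real.sqrt_nonneg _)
  have := hD.mul_mul_conjTranspose_same (hM.1.eigenvectorUnitary : Matrix (Fin d) (Fin d) ℂ)
  unfold Matrix.PosSemidef.sqrt
  rw [Matrix.star_eq_conjTranspose]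
  exact this

lemma Matrix.PosSemidef.sqrt_mul_self {d : ℕ} {M : Matrix (Fin d) (Fin d) ℂ}
    (hM : M.PosSemidef) : hM.sqrt * hM.sqrt = M := by
  have hSU : (star hM.1.eigenvectorUnitary : Matrix (Fin d) (Fin d) ℂ) *
      hM.1.eigenvectorUnitary.1 = 1 := Unitary.coe_star_mul_self hM.1.eigenvectorUnitary
  have hDD : diagonal (fun i => ((Real.sqrt (hM.1.eigenvalues i) : ℝ) : ℂ)) *
      diagonal (fun i => ((Real.sqrt (hM.1.eigenvalues i) : ℝ) : ℂ)) =
      diagonal (RCLike.ofReal ∘ hM.1.eigenvalues) := by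
    rw [Matrix.diagonal_mul_diagonal]
    congr 1
    funext i
    rw [← Complex.ofReal_mul, Real.mul_self_sqrt (hM.eigenvalues_nonneg i)]
    rfl
  conv_rhs => rw [hM.1.spectral_theorem, Unitary.conjStarAlgAut_apply]
  unfold Matrix.PosSemidef.sqrt
  rw [← hDD]
  simp only [Matrix.mul_assoc]
  rw [← Matrix.mul_assoc _ (hM.1.eigenvectorUnitary : Matrix (Fin d) (Fin d) ℂ), hSU,
    Matrix.one_mul]

lemma dot_cs {d : ℕ} (a b : Fin d → ℂ) :
    ‖star a ⬝ᵥ b‖ ^ 2 ≤ (star a ⬝ᵥ a).re * (star b ⬝ᵥ b).re := by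
  have h := norm_inner_le_norm (𝕜 := ℂ) ((WithLp.equiv 2 (Fin d → ℂ)).symm a)
    ((WithLp.equiv 2 (Fin d → ℂ)).symm b)
  change ‖b ⬝ᵥ star a‖ ≤ _ at h
  rw [dotProduct_comm] at h
  have h2 : ‖star a ⬝ᵥ b‖ ^ 2 ≤
      (‖(WithLp.equiv 2 (Fin d → ℂ)).symm a‖ * ‖(WithLp.equiv 2 (Fin d → ℂ)).symm b‖) ^ 2 := by
    exact pow_le_pow_left₀ (norm_nonneg _) h 2
  rw [mul_pow] at h2
  refine h2.trans_eq ?_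
  rw [← inner_self_eq_norm_sq (𝕜 := ℂ), ← inner_self_eq_norm_sq (𝕜 := ℂ)]
  change (a ⬝ᵥ star a).re * (b ⬝ᵥ star b).re = _
  rw [dotProduct_comm a, dotProduct_comm b]

lemma psd_trace_re_nonneg {d : ℕ} {M : Matrix (Fin d) (Fin d) ℂ} (hM : M.PosSemidef) :
    0 ≤ M.trace.re := by
  rw [Matrix.trace, Complex.re_sum]
  refine Finset.sum_nonneg fun i _ => ?_
  have := hM.re_dotProduct_nonneg (Pi.single i 1)
  simpa [Matrix.mulVec_single, dotProduct, Pi.single_apply, Matrix.diag] using this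

lemma trace_conj_eq_sum {d : ℕ} (M P : Matrix (Fin d) (Fin d) ℂ) :
    (Pᴴ * M * P).trace = ∑ i, star (fun k => P k i) ⬝ᵥ (M *ᵥ fun k => P k i) := by
  rw [Matrix.trace]
  refine Finset.sum_congr rfl fun i _ => ?_
  simp only [Matrix.diag, Matrix.mul_apply, Matrix.conjTranspose_apply, dotProduct,
    Matrix.mulVec, Pi.star_apply, Finset.sum_mul, Finset.mul_sum]
  rw [Finset.sum_comm]
  refine Finset.sum_congr rfl fun k _ => Finset.sum_congr rfl fun l _ => ?_
  ring

lemma trace_sqrt_eq {d : ℕ} {M : Matrix (Fin d) (Fin d) ℂ} (hM : M.PosSemidef) :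
    hM.sqrt.trace = ∑ i, (Real.sqrt (hM.1.eigenvalues i) : ℂ) := by
  rw [Matrix.PosSemidef.sqrt, Matrix.trace_mul_cycle]
  have : (star hM.1.eigenvectorUnitary : Matrix (Fin d) (Fin d) ℂ) * hM.1.eigenvectorUnitary.1
      = 1 := Unitary.coe_star_mul_self hM.1.eigenvectorUnitary
  rw [this, one_mul, Matrix.trace_diagonal]

lemma eigvec_orthonormal {d : ℕ} {M : Matrix (Fin d) (Fin d) ℂ} (hM : M.IsHermitian)
    (i j : Fin d) :
    star (⇑(hM.eigenvectorBasis i)) ⬝ᵥ ⇑(hM.eigenvectorBasis j)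
      = if i = j then 1 else 0 := by
  have := orthonormal_iff_ite.mp hM.eigenvectorBasis.orthonormal i j
  rw [EuclideanSpace.inner_eq_star_dotProduct, dotProduct_comm] at this
  exact_mod_cast this


/-- for positive semidefinite matrices `A` and `B`,
`tr |A^{1/2} B^{1/2}| ≤ √(tr A · tr B)`. -/
theorem trace_abs_sqrt_mul_sqrt_le
    (d : ℕ) (hd : 1 ≤ d)
    (A B : Matrix (Fin d) (Fin d) ℂ) (hA : A.PosSemidef) (hB : B.PosSemidef) :
    ((matAbs (matSqrt A * matSqrt B)).trace).re ≤ Real.sqrt (A.trace.re * B.trace.re) := by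
  classical
  have hsA : matSqrt A = hA.sqrt := dif_pos hA
  have hsB : matSqrt B = hB.sqrt := dif_pos hB
  set X := hA.sqrt * hB.sqrt with hXdef
  have hH : (Xᴴ * X).PosSemidef := Matrix.posSemidef_conjTranspose_mul_self X
  have habs : matAbs (matSqrt A * matSqrt B) = hH.sqrt := by
    rw [matAbs, hsA, hsB, matSqrt, dif_pos hH]
    rfl
  rw [habs, trace_sqrt_eq hH, Complex.re_sum]
  simp only [Complex.ofReal_re]
  set lam : Fin d → ℝ := hH.1.eigenvalues with hlamdef
  have hlam0 : ∀ i, 0 ≤ lam i := hH.eigenvalues_nonneg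
  set v : Fin d → Fin d → ℂ := fun i => ⇑(hH.1.eigenvectorBasis i) with hvdef
  set w : Fin d → Fin d → ℂ := fun i => X *ᵥ v i with hwdef
  -- orthogonality of the w's
  have hXv : ∀ j, (Xᴴ * X) *ᵥ v j = (lam j) • v j := fun j => hH.1.mulVec_eigenvectorBasis j
  have hw : ∀ i j, star (w i) ⬝ᵥ w j = if i = j then ((lam j : ℝ) : ℂ) else 0 := by
    intro i j
    rw [hwdef]
    simp only
    rw [Matrix.star_mulVec, ← Matrix.dotProduct_mulVec, Matrix.mulVec_mulVec, hXv j,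
      dotProduct_smul, eigvec_orthonormal hH.1 i j]
    by_cases h : i = j <;> simp [h, Complex.real_smul]
  -- the vectors u i
  set u : Fin d → Fin d → ℂ := fun i => if lam i = 0 then 0 else (Real.sqrt (lam i))⁻¹ • w i
    with hudef
  set q : Fin d → ℝ := fun i => (star (v i) ⬝ᵥ (B *ᵥ v i)).re with hqdef
  set p : Fin d → ℝ := fun i => (star (u i) ⬝ᵥ (A *ᵥ u i)).re with hpdef
  have hq0 : ∀ i, 0 ≤ q i := fun i => hB.re_dotProduct_nonneg _
  have hp0 : ∀ i, 0 ≤ p i := fun i => hA.re_dotProduct_nonneg _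
  -- pointwise key inequality
  have hAherm : hA.sqrtᴴ = hA.sqrt := hA.posSemidef_sqrt.isHermitian
  have hBherm : hB.sqrtᴴ = hB.sqrt := hB.posSemidef_sqrt.isHermitian
  have key : ∀ i, Real.sqrt (lam i) ≤ Real.sqrt (p i * q i) := by
    intro i
    by_cases h0 : lam i = 0
    · rw [h0, Real.sqrt_zero]; exact Real.sqrt_nonneg _
    apply Real.sqrt_le_sqrt
    have hpos : 0 < lam i := lt_of_le_of_ne (hlam0 i) (Ne.symm h0)
    have hui : u i = (Real.sqrt (lam i))⁻¹ • w i := if_neg h0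
    -- t := Re ⟨w, A w⟩
    set t : ℝ := (star (w i) ⬝ᵥ (A *ᵥ w i)).re with htdef
    have hpt : p i = (lam i)⁻¹ * t := by
      rw [hpdef]
      simp only [hui, Matrix.mulVec_smul, star_smul, star_trivial, smul_dotProduct,
        dotProduct_smul, Complex.real_smul, ← Complex.ofReal_mul]
      rw [← mul_assoc, ← Complex.ofReal_mul, ← mul_inv, Real.mul_self_sqrt (hlam0 i),
        Complex.re_ofReal_mul]
    -- relate w to sqrt A, sqrt B
    have hwav : w i = hA.sqrt *ᵥ (hB.sqrt *ᵥ v i) := by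
      rw [hwdef]; simp only [hXdef, ← Matrix.mulVec_mulVec]
    set a : Fin d → ℂ := hA.sqrt *ᵥ w i with hadef
    set b : Fin d → ℂ := hB.sqrt *ᵥ v i with hbdef
    have h1 : star a ⬝ᵥ b = star (w i) ⬝ᵥ w i := by
      rw [hadef, Matrix.star_mulVec, hAherm, ← Matrix.dotProduct_mulVec, ← hwav]
    have h2 : (star a ⬝ᵥ a).re = t := by
      rw [hadef, Matrix.star_mulVec, hAherm, ← Matrix.dotProduct_mulVec,
        Matrix.mulVec_mulVec, hA.sqrt_mul_self]
    have h3 : (star b ⬝ᵥ b).re = q i := by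
      rw [hbdef, Matrix.star_mulVec, hBherm, ← Matrix.dotProduct_mulVec,
        Matrix.mulVec_mulVec, hB.sqrt_mul_self]
    have hcs := dot_cs a b
    rw [h2, h3, h1, hw i i, if_pos rfl] at hcs
    rw [Complex.norm_of_nonneg (hlam0 i)] at hcs
    -- hcs : lam i ^ 2 ≤ t * q i ; p i = lam⁻¹ t
    have h4 : lam i * lam i ≤ lam i * (p i * q i) := by
      have e1 : lam i * (p i * q i) = t * q i := by
        rw [hpt]; field_simp
      rw [e1, ← sq]; exact hcs
    exact le_of_mul_le_mul_left h4 hpos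
  -- sum of q equals trace of B
  have hUcol : ∀ i, (fun k => (hH.1.eigenvectorUnitary : Matrix (Fin d) (Fin d) ℂ) k i) = v i := by
    intro i; funext k; simp [hvdef]
  have hqsum : ∑ i, q i = B.trace.re := by
    have h := trace_conj_eq_sum B (hH.1.eigenvectorUnitary : Matrix (Fin d) (Fin d) ℂ)
    simp only [hUcol] at h
    have htr : ((hH.1.eigenvectorUnitary : Matrix (Fin d) (Fin d) ℂ)ᴴ * B *
        (hH.1.eigenvectorUnitary : Matrix (Fin d) (Fin d) ℂ)).trace = B.trace := by
      rw [Matrix.trace_mul_cycle]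
      have : (hH.1.eigenvectorUnitary : Matrix (Fin d) (Fin d) ℂ) *
          (hH.1.eigenvectorUnitary : Matrix (Fin d) (Fin d) ℂ)ᴴ = 1 :=
        Unitary.coe_mul_star_self hH.1.eigenvectorUnitary
      rw [this, one_mul]
    rw [htr] at h
    rw [show B.trace = ∑ i, star (v i) ⬝ᵥ (B *ᵥ v i) from h, Complex.re_sum]
  -- sum of p is at most trace of A
  have hpsum : ∑ i, p i ≤ A.trace.re := by
    set P : Matrix (Fin d) (Fin d) ℂ := Matrix.of fun k i => u i k with hPdef
    have hcol : ∀ i, (fun k => P k i) = u i := fun i => rfl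
    set e : Fin d → ℂ := fun i => if lam i = 0 then 0 else 1 with hedef
    have hPP : Pᴴ * P = Matrix.diagonal e := by
      ext i j
      have : (Pᴴ * P) i j = star (u i) ⬝ᵥ u j := by
        simp [Matrix.mul_apply, dotProduct, Matrix.conjTranspose_apply, hPdef]
      rw [this, Matrix.diagonal_apply]
      by_cases hi : lam i = 0
      · simp [hudef, hi, hedef]
      by_cases hj : lam j = 0
      · have hij : i ≠ j := fun hij => hi (hij ▸ hj)
        simp [hudef, hj, hij]
      simp only [hudef, if_neg hi, if_neg hj]
      rw [star_smul, star_trivial, smul_dotProduct, dotProduct_smul, hw i j]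
      by_cases hij : i = j
      · subst hij
        rw [if_pos rfl, if_pos rfl, smul_smul, ← mul_inv, Real.mul_self_sqrt (hlam0 i),
          Complex.real_smul, ← Complex.ofReal_mul, inv_mul_cancel₀ hi, Complex.ofReal_one]
        simp [hedef, hi]
      · simp [hij]
    have hPe : P * Matrix.diagonal e = P := by
      ext k i
      rw [Matrix.mul_apply]
      rw [Finset.sum_eq_single i]
      · by_cases hi : lam i = 0
        · simp [hPdef, hudef, hi, hedef]
        · simp [hedef, hi]
      · intro b _ hb; simp [Matrix.diagonal_apply_ne _ hb]
      · simp
    set Q : Matrix (Fin d) (Fin d) ℂ := P * Pᴴ with hQdef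
    have hQQ : Q * Q = Q := by
      rw [hQdef, Matrix.mul_assoc, ← Matrix.mul_assoc Pᴴ, hPP, ← Matrix.mul_assoc, hPe]
    have hQherm : Qᴴ = Q := by rw [hQdef, Matrix.conjTranspose_mul, Matrix.conjTranspose_conjTranspose]
    -- sum p = Re tr (A * Q)
    have h := trace_conj_eq_sum A P
    simp only [hcol] at h
    have hps : ∑ i, p i = ((A * Q).trace).re := by
      have h2 : (Pᴴ * A * P).trace = (A * Q).trace := by
        rw [Matrix.trace_mul_cycle, Matrix.trace_mul_comm]
      rw [show (A * Q).trace = (Pᴴ * A * P).trace from h2.symm, h, Complex.re_sum]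
    -- tr(A) - tr(AQ) = tr((1-Q) A (1-Q)ᴴ) ≥ 0
    set R : Matrix (Fin d) (Fin d) ℂ := 1 - Q with hRdef
    have hRherm : Rᴴ = R := by
      rw [hRdef, Matrix.conjTranspose_sub, Matrix.conjTranspose_one, hQherm]
    have hRR : R * R = R := by
      calc R * R = 1 - Q - Q + Q * Q := by rw [hRdef]; noncomm_ring
        _ = R := by rw [hQQ, hRdef]; abel
    have hpsd : (R * A * Rᴴ).PosSemidef := hA.mul_mul_conjTranspose_same R
    rw [hRherm] at hpsd
    have e1 : (R * A * R).trace = A.trace - (A * Q).trace := by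
      rw [Matrix.trace_mul_cycle, Matrix.trace_mul_comm, hRR, hRdef, Matrix.mul_sub, mul_one,
        Matrix.trace_sub]
    have hge := psd_trace_re_nonneg hpsd
    rw [e1, Complex.sub_re] at hge
    rw [hps]; linarith
  -- final assembly
  have hq0' : (0:ℝ) ≤ ∑ i, q i := Finset.sum_nonneg fun i _ => hq0 i
  have hp0' : (0:ℝ) ≤ ∑ i, p i := Finset.sum_nonneg fun i _ => hp0 i
  calc ∑ i, Real.sqrt (lam i) ≤ ∑ i, Real.sqrt (p i * q i) :=
        Finset.sum_le_sum fun i _ => key i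
    _ ≤ Real.sqrt (A.trace.re * B.trace.re) := by
        rw [Real.le_sqrt (Finset.sum_nonneg fun i _ => Real.sqrt_nonneg _)
          (mul_nonneg (hp0'.trans hpsum) (hqsum ▸ hq0'))]
        have hcs2 := Finset.sum_sq_le_sum_mul_sum_of_sq_eq_mul Finset.univ
          (r := fun i => Real.sqrt (p i * q i)) (f := p) (g := q)
          (fun i _ => hp0 i) (fun i _ => hq0 i)
          (fun i _ => Real.sq_sqrt (mul_nonneg (hp0 i) (hq0 i)))
        refine hcs2.trans ?_
        exact mul_le_mul hpsum (le_of_eq hqsum) hq0' (hp0'.trans hpsum)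
end
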